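/- arXiv:2007.10229 — 6 statements merged into one kernel-verified Lean document; each statement's English description precedes it below -/
import Mathlib

section
/- Let (X_s)_{s ∈ ℕ} be an integrable stochastic process adapted to a filtration (F_s) on a probability space, with X_s > 0 almost surely for every s, and suppose there is a constant c > 0 such that E[ X_{s+1} | F_s ] − X_s ≤ −c·X_s² almost surely for every s. Then X_s → 0 almost surely as s → ∞. -/
open MeasureTheory Filter

/-- **Proposition (almost-sure convergence under a quadratic drift).**
Let `(X_s)` be an integrable process adapted to a filtration `(F_s)` on a
probability space, with `X_s > 0` a.s. for every `s`, and suppose there is a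
constant `c > 0` with `E[X_{s+1} | F_s] − X_s ≤ −c·X_s²` a.s. for every `s`.
Then `X_s → 0` almost surely. -/
theorem drift_implies_as_convergence_to_zero
    {Ω : Type*} {m : MeasurableSpace Ω} {μ : Measure Ω} [IsProbabilityMeasure μ]
    (ℱ : Filtration ℕ m) (X : ℕ → Ω → ℝ)
    (hadapt : ∀ s, StronglyMeasurable[ℱ s] (X s))
    (hint : ∀ s, Integrable (X s) μ)
    (hpos : ∀ s, ∀ᵐ ω ∂μ, 0 < X s ω)
    (c : ℝ) (hc : 0 < c)
    (hdrift : ∀ s, ∀ᵐ ω ∂μ, (μ[X (s + 1) | ℱ s]) ω - X s ω ≤ -c * (X s ω) ^ 2) :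
    ∀ᵐ ω ∂μ, Tendsto (fun s => X s ω) atTop (nhds 0) := by
  -- X is a supermartingale
  have hsup : Supermartingale X ℱ μ := by
    refine supermartingale_nat hadapt hint fun i => ?_
    filter_upwards [hdrift i] with ω hω
    nlinarith [sq_nonneg (X i ω)]
  -- integrals are monotone decreasing and nonneg
  have hInonneg : ∀ n, 0 ≤ ∫ ω, X n ω ∂μ := fun n =>
    integral_nonneg_of_ae ((hpos n).mono fun ω h => h.le)
  have hImono : ∀ n, ∫ ω, X n ω ∂μ ≤ ∫ ω, X 0 ω ∂μ := by
    intro n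
    have h1 : ∫ ω, X n ω ∂μ = ∫ ω, (μ[X n | ℱ 0]) ω ∂μ :=
      (integral_condExp (ℱ.le 0)).symm
    rw [h1]
    exact integral_mono_ae integrable_condExp (hint 0) ((Supermartingale.condExp_ae_le hsup (Nat.zero_le n)))
  -- L¹ boundedness
  have hbdd : ∀ n, eLpNorm (X n) 1 μ ≤ (∫ ω, X 0 ω ∂μ).toNNReal := by
    intro n
    have h1 : eLpNorm (X n) 1 μ = ∫⁻ ω, ENNReal.ofReal (X n ω) ∂μ := by
      rw [eLpNorm_one_eq_lintegral_enorm]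
      refine lintegral_congr_ae ?_
      filter_upwards [hpos n] with ω hω
      rw [Real.enorm_eq_ofReal hω.le]
    rw [h1, ← ofReal_integral_eq_lintegral_ofReal (hint n)
      ((hpos n).mono fun ω h => h.le)]
    refine (ENNReal.ofReal_le_ofReal (hImono n)).trans ?_
    rw [ENNReal.ofReal]
  -- a.e. convergence of the supermartingale
  have hconv : ∀ᵐ ω ∂μ, ∃ l, Tendsto (fun n => X n ω) atTop (nhds l) := by
    have := hsup.neg.exists_ae_tendsto_of_bdd (R := (∫ ω, X 0 ω ∂μ).toNNReal)
      (fun n => by rw [show (-X) n = -(X n) from rfl, eLpNorm_neg]; exact hbdd n)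
    filter_upwards [this] with ω ⟨l, hl⟩
    refine ⟨-l, ?_⟩
    have : (fun n => X n ω) = fun n => -((-X) n ω) := by funext n; simp
    rw [this]
    exact hl.neg
  -- integrability of X s ^ 2
  have hsqmeas : ∀ s, AEStronglyMeasurable (fun ω => (X s ω) ^ 2) μ := fun s =>
    (((hadapt s).mono (ℱ.le s)).pow 2).aestronglyMeasurable
  have hsqint : ∀ s, Integrable (fun ω => (X s ω) ^ 2) μ := by
    intro s
    have hg : Integrable (fun ω => (1 / c) * (X s ω - (μ[X (s + 1) | ℱ s]) ω)) μ :=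
      ((hint s).sub integrable_condExp).const_mul (1 / c)
    refine Integrable.mono' hg (hsqmeas s) ?_
    filter_upwards [hdrift s] with ω hω
    rw [Real.norm_eq_abs, abs_of_nonneg (sq_nonneg _)]
    rw [div_mul_eq_mul_div, one_mul, le_div_iff₀ hc, mul_comm]
    nlinarith
  -- key integral inequality
  have hkey : ∀ s, c * ∫ ω, (X s ω) ^ 2 ∂μ ≤ (∫ ω, X s ω ∂μ) - ∫ ω, X (s + 1) ω ∂μ := by
    intro s
    have h1 : ∫ ω, (μ[X (s + 1) | ℱ s]) ω ∂μ = ∫ ω, X (s + 1) ω ∂μ :=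
      integral_condExp (ℱ.le s)
    have h2 : ∫ ω, c * (X s ω) ^ 2 ∂μ ≤ ∫ ω, (X s ω - (μ[X (s + 1) | ℱ s]) ω) ∂μ := by
      refine integral_mono_ae ((hsqint s).const_mul c) ((hint s).sub integrable_condExp) ?_
      filter_upwards [hdrift s] with ω hω
      nlinarith
    rwa [integral_const_mul, integral_sub (hint s) integrable_condExp, h1] at h2
  -- summability hence convergence to zero of ∫ X s ^ 2
  have hsumm : Summable (fun s => c * ∫ ω, (X s ω) ^ 2 ∂μ) := by
    refine summable_of_sum_range_le
      (fun s => mul_nonneg hc.le (integral_nonneg (fun ω => sq_nonneg _)))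
      (fun n => ?_) (c := ∫ ω, X 0 ω ∂μ)
    calc ∑ i ∈ Finset.range n, c * ∫ ω, (X i ω) ^ 2 ∂μ
        ≤ ∑ i ∈ Finset.range n, ((∫ ω, X i ω ∂μ) - ∫ ω, X (i + 1) ω ∂μ) :=
          Finset.sum_le_sum fun i _ => hkey i
      _ = (∫ ω, X 0 ω ∂μ) - ∫ ω, X n ω ∂μ := Finset.sum_range_sub' _ n
      _ ≤ ∫ ω, X 0 ω ∂μ := by linarith [hInonneg n]
  have htend : Tendsto (fun s => ∫ ω, (X s ω) ^ 2 ∂μ) atTop (nhds 0) := by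
    have h1 := hsumm.tendsto_atTop_zero
    have h2 : Tendsto (fun s => (1 / c) * (c * ∫ ω, (X s ω) ^ 2 ∂μ)) atTop (nhds ((1/c) * 0)) :=
      h1.const_mul _
    simpa [mul_assoc, one_div, inv_mul_cancel_left₀ hc.ne'] using h2
  -- lintegral version
  have hlem : ∀ s, ∫⁻ ω, ENNReal.ofReal ((X s ω) ^ 2) ∂μ
      = ENNReal.ofReal (∫ ω, (X s ω) ^ 2 ∂μ) :=
    fun s => (ofReal_integral_eq_lintegral_ofReal (hsqint s)
      (Eventually.of_forall fun ω => sq_nonneg _)).symm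
  have hltend : Tendsto (fun s => ∫⁻ ω, ENNReal.ofReal ((X s ω) ^ 2) ∂μ) atTop (nhds 0) := by
    simp_rw [hlem]
    simpa using (ENNReal.tendsto_ofReal htend)
  -- Fatou
  have hmeas : ∀ s, Measurable (fun ω => ENNReal.ofReal ((X s ω) ^ 2)) := fun s =>
    (((hadapt s).measurable.mono (ℱ.le s) le_rfl).pow_const 2).ennreal_ofReal
  have hfatou : ∫⁻ ω, atTop.liminf (fun s => ENNReal.ofReal ((X s ω) ^ 2)) ∂μ = 0 := by
    refine le_antisymm ?_ (zero_le)
    calc ∫⁻ ω, atTop.liminf (fun s => ENNReal.ofReal ((X s ω) ^ 2)) ∂μ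
        ≤ atTop.liminf (fun s => ∫⁻ ω, ENNReal.ofReal ((X s ω) ^ 2) ∂μ) :=
          lintegral_liminf_le hmeas
      _ = 0 := hltend.liminf_eq
  have hliminf0 : ∀ᵐ ω ∂μ, atTop.liminf (fun s => ENNReal.ofReal ((X s ω) ^ 2)) = 0 := by
    have := (lintegral_eq_zero_iff (by measurability)).mp hfatou
    filter_upwards [this] with ω hω using hω
  -- conclude
  filter_upwards [hconv, hliminf0, ae_all_iff.2 hpos] with ω ⟨l, hl⟩ hlim hp
  have hlge : 0 ≤ l := le_of_tendsto_of_tendsto' tendsto_const_nhds hl fun n => (hp n).le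
  have hsq : Tendsto (fun s => ENNReal.ofReal ((X s ω) ^ 2)) atTop
      (nhds (ENNReal.ofReal (l ^ 2))) :=
    ENNReal.tendsto_ofReal ((hl.pow 2))
  have : ENNReal.ofReal (l ^ 2) = 0 := by rw [← hsq.liminf_eq]; exact hlim
  have hl2 : l ^ 2 ≤ 0 := by
    by_contra h
    push_neg at h
    exact (ENNReal.ofReal_pos.2 h).ne' this
  have : l = 0 := by nlinarith
  rwa [this] at hl
end

section
/- Let (X_s)_{s ∈ ℕ} be an integrable stochastic process adapted to a filtration (F_s) on a probability space, with X_s > 0 almost surely for every s, and suppose there is a constant c > 0 such that E[ X_{s+1} | F_s ] − X_s ≤ −c·X_s² almost surely for every s. Then for every s ∈ ℕ, E[X_s] ≤ E[X_0] / (1 + c·E[X_0]·s). In particular, if additionally X_0 ≤ 1/2 almost surely, then E[X_s] ≤ 1/(2 + c·s). -/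
open MeasureTheory Filter

private lemma drift_aux (a : ℕ → ℝ) (c : ℝ) (hc : 0 < c) (hpos : ∀ s, 0 < a s)
    (hstep : ∀ s, a (s + 1) ≤ a s - c * (a s) ^ 2) :
    ∀ s : ℕ, 1 / a 0 + c * s ≤ 1 / a s := by
  intro s
  induction s with
  | zero => simp
  | succ n ih =>
    have hn := hpos n
    have hn1 := hpos (n + 1)
    have hd : 0 < a n - c * (a n) ^ 2 := lt_of_lt_of_le hn1 (hstep n)
    have hu : (1 / a n) * a n = 1 := one_div_mul_cancel hn.ne'
    have key : 1 / a n + c ≤ 1 / (a n - c * (a n) ^ 2) := by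
      rw [le_div_iff₀ hd]
      nlinarith [sq_nonneg (c * a n), hu, hn]
    have h2 : 1 / (a n - c * (a n) ^ 2) ≤ 1 / a (n + 1) :=
      one_div_le_one_div_of_le hn1 (hstep n)
    have hin : 1 / a 0 + c * n ≤ 1 / a n := ih
    push_cast
    nlinarith

/-- **Proposition (expectation decay under a quadratic drift).**
Let `(X_s)` be an integrable process adapted to a filtration `(F_s)` on a
probability space, with `X_s > 0` a.s. for every `s`, and suppose there is a
constant `c > 0` with `E[X_{s+1} | F_s] − X_s ≤ −c·X_s²` a.s. for every `s`.
Then `E[X_s] ≤ E[X_0]/(1 + c·E[X_0]·s)` for every `s`; in particular, if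
additionally `X_0 ≤ 1/2` a.s., then `E[X_s] ≤ 1/(2 + c·s)`. -/
theorem drift_implies_expectation_decay
    {Ω : Type*} {m : MeasurableSpace Ω} {μ : Measure Ω} [IsProbabilityMeasure μ]
    (ℱ : Filtration ℕ m) (X : ℕ → Ω → ℝ)
    (hadapt : ∀ s, StronglyMeasurable[ℱ s] (X s))
    (hint : ∀ s, Integrable (X s) μ)
    (hpos : ∀ s, ∀ᵐ ω ∂μ, 0 < X s ω)
    (c : ℝ) (hc : 0 < c)
    (hdrift : ∀ s, ∀ᵐ ω ∂μ, (μ[X (s + 1) | ℱ s]) ω - X s ω ≤ -c * (X s ω) ^ 2) :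
    (∀ s : ℕ, (∫ ω, X s ω ∂μ) ≤ (∫ ω, X 0 ω ∂μ) / (1 + c * (∫ ω, X 0 ω ∂μ) * s)) ∧
      ((∀ᵐ ω ∂μ, X 0 ω ≤ 1 / 2) →
        ∀ s : ℕ, (∫ ω, X s ω ∂μ) ≤ 1 / (2 + c * s)) := by
  set a : ℕ → ℝ := fun s => ∫ ω, X s ω ∂μ with ha
  -- positivity of the expectations
  have hapos : ∀ s, 0 < a s := by
    intro s
    show 0 < ∫ ω, X s ω ∂μ
    rw [integral_pos_iff_support_of_nonneg_ae ((hpos s).mono fun ω h => h.le) (hint s)]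
    by_contra h
    push_neg at h
    have hz : μ (Function.support (X s)) = 0 := le_antisymm h bot_le
    have hzero : ∀ᵐ ω ∂μ, X s ω = 0 := by
      rw [ae_iff]
      convert hz using 2
      exact rfl
    have hF : ∀ᵐ ω ∂μ, False := by
      filter_upwards [hzero, hpos s] with ω h1 h2
      rw [h1] at h2; exact lt_irrefl 0 h2
    obtain ⟨_, h⟩ := hF.exists
    exact h
  -- the drift step for expectations
  have hstep : ∀ s, a (s + 1) ≤ a s - c * (a s) ^ 2 := by
    intro s
    have hY : Integrable (μ[X (s + 1) | ℱ s]) μ := integrable_condExp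
    have hsm : AEStronglyMeasurable (fun ω => c * (X s ω) ^ 2) μ := by
      have h1 : AEStronglyMeasurable (X s) μ := (hint s).aestronglyMeasurable
      exact ((h1.mul h1).const_mul c).congr
        (by filter_upwards with ω; simp [Pi.mul_apply, sq])
    have hcf : Integrable (fun ω => c * (X s ω) ^ 2) μ := by
      refine Integrable.mono ((hint s).sub hY) hsm ?_
      filter_upwards [hdrift s] with ω hω
      have h0 : 0 ≤ c * (X s ω) ^ 2 := by positivity
      rw [Real.norm_eq_abs, Real.norm_eq_abs, abs_of_nonneg h0]
      have h3 : c * (X s ω) ^ 2 ≤ X s ω - (μ[X (s + 1) | ℱ s]) ω := by linarith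
      exact h3.trans (le_abs_self _)
    have hf2 : Integrable (fun ω => (X s ω) ^ 2) μ := by
      have := hcf.const_mul c⁻¹
      simpa [← mul_assoc, inv_mul_cancel₀ hc.ne'] using this
    have hA : Integrable (fun ω => (X s ω) ^ 2 - 2 * a s * X s ω) μ :=
      hf2.sub ((hint s).const_mul (2 * a s))
    -- Jensen: (E X)^2 ≤ E X^2
    have hjensen : (a s) ^ 2 ≤ ∫ ω, (X s ω) ^ 2 ∂μ := by
      have hvar : 0 ≤ ∫ ω, (X s ω - a s) ^ 2 ∂μ := integral_nonneg fun ω => sq_nonneg _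
      have hXa : ∫ ω, X s ω ∂μ = a s := rfl
      have hexp : ∫ ω, (X s ω - a s) ^ 2 ∂μ
          = (∫ ω, (X s ω) ^ 2 ∂μ) - 2 * a s * a s + (a s) ^ 2 := by
        calc ∫ ω, (X s ω - a s) ^ 2 ∂μ
            = ∫ ω, ((X s ω) ^ 2 - 2 * a s * X s ω + (a s) ^ 2) ∂μ := by
              congr 1; funext ω; ring
          _ = (∫ ω, ((X s ω) ^ 2 - 2 * a s * X s ω) ∂μ) + ∫ ω, (a s) ^ 2 ∂μ :=
              integral_add hA (integrable_const _)
          _ = (∫ ω, (X s ω) ^ 2 ∂μ) - (∫ ω, 2 * a s * X s ω ∂μ) + (a s) ^ 2 := by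
              rw [integral_sub hf2 ((hint s).const_mul (2 * a s)), integral_const]; simp
          _ = (∫ ω, (X s ω) ^ 2 ∂μ) - 2 * a s * a s + (a s) ^ 2 := by
              rw [integral_const_mul, hXa]
      rw [hexp] at hvar
      nlinarith
    have hmono : ∫ ω, (μ[X (s + 1) | ℱ s]) ω ∂μ
        ≤ ∫ ω, (X s ω - c * (X s ω) ^ 2) ∂μ := by
      refine integral_mono_ae hY ((hint s).sub hcf) ?_
      filter_upwards [hdrift s] with ω hω
      linarith
    have hcond : ∫ ω, (μ[X (s + 1) | ℱ s]) ω ∂μ = ∫ ω, X (s + 1) ω ∂μ :=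
      integral_condExp (ℱ.le s)
    rw [hcond, integral_sub (hint s) hcf, integral_const_mul] at hmono
    have hc2 : c * (a s) ^ 2 ≤ c * ∫ ω, (X s ω) ^ 2 ∂μ :=
      mul_le_mul_of_nonneg_left hjensen hc.le
    show (∫ ω, X (s + 1) ω ∂μ) ≤ a s - c * (a s) ^ 2
    have hXa : ∫ ω, X s ω ∂μ = a s := rfl
    rw [hXa] at hmono
    linarith
  have hbound := drift_aux a c hc hapos hstep
  have ha0 := hapos 0
  constructor
  · intro s
    have ht : (0 : ℝ) < 1 / a 0 + c * s := by positivity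
    have h1 : a s ≤ 1 / (1 / a 0 + c * s) := by
      rw [← one_div_one_div (a s)]
      exact one_div_le_one_div_of_le ht (hbound s)
    have heq : 1 / (1 / a 0 + c * (s : ℝ)) = a 0 / (1 + c * a 0 * s) := by
      rw [div_eq_div_iff ht.ne' (by positivity : (0:ℝ) < 1 + c * a 0 * s).ne']
      field_simp
    rw [heq] at h1
    exact h1
  · intro h0 s
    have ha0le : a 0 ≤ 1 / 2 := by
      have := integral_mono_ae (hint 0) (integrable_const (1 / 2 : ℝ)) h0
      simpa using this
    have h2 : (2 : ℝ) ≤ 1 / a 0 := by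
      rw [le_div_iff₀ ha0]; linarith
    have ht : (0 : ℝ) < 2 + c * s := by positivity
    have h3 : 2 + c * (s : ℝ) ≤ 1 / a s := by linarith [hbound s]
    calc a s = 1 / (1 / a s) := (one_div_one_div _).symm
    _ ≤ 1 / (2 + c * s) := one_div_le_one_div_of_le ht h3
end

section
/- Let (q̄(t))_{t ∈ ℕ} be a sequence of real numbers in the interval (0,1) such that q̄(t+1) − q̄(t) ≤ −η·q̄(t)² / (1 − log(θ·q̄(t))) for all t, where η > 0, θ > 0 and θ·q̄(0) ≤ 1. Then for every T with η·T/θ ≥ e, q̄(T) ≤ (1/(η·T))·log(η·T/θ). -/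
lemma samba_step (θ η a b : ℝ) (hθ : 0 < θ) (hη : 0 < η) (ha : 0 < a) (hb : 0 < b)
    (hθa : θ * a ≤ 1)
    (hrec : b - a ≤ -η * a ^ 2 / (1 - Real.log (θ * a))) :
    θ * b ≤ 1 ∧ Real.log (θ * b) / b ≤ Real.log (θ * a) / a - η := by
  set La := Real.log (θ * a) with hLa_def
  set Lb := Real.log (θ * b) with hLb_def
  have hLa : La ≤ 0 := Real.log_nonpos (by positivity) hθa
  have hden : (1:ℝ) ≤ 1 - La := by linarith
  have hdenpos : (0:ℝ) < 1 - La := by linarith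
  -- b ≤ a
  have hba : b ≤ a := by
    have h1 : -η * a ^ 2 / (1 - La) ≤ 0 := by
      apply div_nonpos_of_nonpos_of_nonneg
      · nlinarith
      · linarith
    linarith
  have hθb : θ * b ≤ 1 := le_trans (by nlinarith) hθa
  refine ⟨hθb, ?_⟩
  -- a * (Lb - La) ≤ b - a
  have hlog : Lb - La = Real.log (b / a) := by
    rw [hLa_def, hLb_def, Real.log_mul hθ.ne' hb.ne', Real.log_mul hθ.ne' ha.ne',
      Real.log_div hb.ne' ha.ne']
    ring
  have hlog2 : Real.log (b / a) ≤ b / a - 1 := Real.log_le_sub_one_of_pos (by positivity)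
  have hLb' : a * (Lb - La) ≤ b - a := by
    have := mul_le_mul_of_nonneg_left (hlog ▸ hlog2) ha.le
    calc a * (Lb - La) ≤ a * (b / a - 1) := this
      _ = b - a := by field_simp
  -- concavity inequality (cleared denominators)
  have stepA : Lb * a ^ 2 ≤ (La * a + (1 - La) * (b - a)) * b := by
    nlinarith [mul_le_mul_of_nonneg_left hLb' ha.le,
      mul_nonneg (sq_nonneg (a - b)) (by linarith : (0:ℝ) ≤ 1 - La)]
  have h1 : Lb / b ≤ (La * a + (1 - La) * (b - a)) / a ^ 2 := by
    rw [div_le_div_iff₀ hb (by positivity)]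
    linarith
  have hrec' : (b - a) * (1 - La) ≤ -η * a ^ 2 := by
    rw [le_div_iff₀ hdenpos] at hrec
    · linarith
  have h2 : (1 - La) * (b - a) / a ^ 2 ≤ -η := by
    rw [div_le_iff₀ (by positivity : (0:ℝ) < a ^ 2)]
    nlinarith
  have h3 : (La * a + (1 - La) * (b - a)) / a ^ 2 = La / a + (1 - La) * (b - a) / a ^ 2 := by
    field_simp
  linarith [h1, h2, h3.le, h3.ge]

/-- **Lemma (discrete o.d.e. comparison with logarithmic factor).**
If `q̄(t) ∈ (0,1)` satisfies `q̄(t+1) − q̄(t) ≤ − η q̄(t)² / (1 − log(θ q̄(t)))`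
with `η, θ > 0` and `θ q̄(0) ≤ 1`, then for every `T` with `η T / θ ≥ e`,
`q̄(T) ≤ (1/(ηT)) log(ηT/θ)`. -/
theorem samba_discrete_ode_log_bound (q : ℕ → ℝ)
    (hq : ∀ t, q t ∈ Set.Ioo (0 : ℝ) 1)
    (η θ : ℝ) (hη : 0 < η) (hθ : 0 < θ) (h0 : θ * q 0 ≤ 1)
    (hrec : ∀ t, q (t + 1) - q t ≤ -η * (q t) ^ 2 / (1 - Real.log (θ * q t))) :
    ∀ T : ℕ, Real.exp 1 ≤ η * T / θ →
      q T ≤ (1 / (η * T)) * Real.log (η * T / θ) := by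
  have key : ∀ t : ℕ, θ * q t ≤ 1 ∧
      Real.log (θ * q t) / q t ≤ Real.log (θ * q 0) / q 0 - η * t := by
    intro t
    induction t with
    | zero => simpa using h0
    | succ n ih =>
      obtain ⟨h1, h2⟩ := ih
      obtain ⟨h3, h4⟩ := samba_step θ η (q n) (q (n + 1)) hθ hη (hq n).1 (hq (n + 1)).1 h1
        (hrec n)
      refine ⟨h3, ?_⟩
      have : (↑(n + 1) : ℝ) = (n : ℝ) + 1 := by push_cast; ring
      rw [this]
      linarith
  intro T hT
  rcases Nat.eq_zero_or_pos T with rfl | hTpos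
  · exfalso
    simp only [Nat.cast_zero, mul_zero, zero_div] at hT
    linarith [Real.exp_pos 1]
  have hTR : (0:ℝ) < (T : ℝ) := by exact_mod_cast hTpos
  have hηT : (0:ℝ) < η * T := by positivity
  set s := η * T / θ with hs_def
  have hspos : (0:ℝ) < s := by positivity
  have hlogs : (1:ℝ) ≤ Real.log s := (Real.le_log_iff_exp_le hspos).2 hT
  have hloglogs : (0:ℝ) ≤ Real.log (Real.log s) := Real.log_nonneg hlogs
  obtain ⟨hθT, hFT⟩ := key T
  have hq0 := (hq 0).1
  have hqT := (hq T).1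
  have hF0 : Real.log (θ * q 0) / q 0 ≤ 0 :=
    div_nonpos_of_nonpos_of_nonneg (Real.log_nonpos (by positivity) h0) hq0.le
  have hFT' : Real.log (θ * q T) / q T ≤ -(η * T) := by linarith
  have hmain : Real.log (θ * q T) ≤ -(η * T) * q T := by
    have := (div_le_iff₀ hqT).1 hFT'
    linarith
  by_contra hc
  push_neg at hc
  set x := 1 / (η * T) * Real.log s with hx_def
  have hxpos : (0:ℝ) < x := by
    rw [hx_def]; positivity
  have hθx : θ * x = Real.log s / s := by
    rw [hx_def, hs_def]
    field_simp
  have hmono : Real.log (θ * x) < Real.log (θ * q T) :=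
    Real.log_lt_log (by positivity) (by nlinarith)
  have hlogθx : Real.log (θ * x) = Real.log (Real.log s) - Real.log s := by
    rw [hθx, Real.log_div (by linarith) hspos.ne']
  have hηTx : η * T * x = Real.log s := by
    rw [hx_def]; field_simp
  nlinarith [mul_lt_mul_of_pos_left hc hηT]
end

section
/- Let (q̄(t))_{t ∈ ℕ} be a sequence of real numbers in the interval (0,1) such that q̄(t+1) − q̄(t) ≤ −η·q̄(t)² / log(e − log(θ·q̄(t))) for all t, where η > 0, θ > 0 and θ·q̄(0) ≤ 1. Then for every T with η·T/θ ≥ 1, q̄(T) ≤ (1/(η·T))·log( e + log(η·T/θ) ). -/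
/-- **Lemma (discrete o.d.e. comparison with iterated-logarithmic factor).**
If `q̄(t) ∈ (0,1)` satisfies
`q̄(t+1) − q̄(t) ≤ − η q̄(t)² / log(e − log(θ q̄(t)))`
with `η, θ > 0` and `θ q̄(0) ≤ 1`, then for every `T` with `η T / θ ≥ 1`,
`q̄(T) ≤ (1/(ηT)) log(e + log(ηT/θ))`. -/
theorem samba_discrete_ode_loglog_bound (q : ℕ → ℝ)
    (hq : ∀ t, q t ∈ Set.Ioo (0 : ℝ) 1)
    (η θ : ℝ) (hη : 0 < η) (hθ : 0 < θ) (h0 : θ * q 0 ≤ 1)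
    (hrec : ∀ t, q (t + 1) - q t ≤
      -η * (q t) ^ 2 / Real.log (Real.exp 1 - Real.log (θ * q t))) :
    ∀ T : ℕ, 1 ≤ η * T / θ →
      q T ≤ (1 / (η * T)) * Real.log (Real.exp 1 + Real.log (η * T / θ)) := by
  have hqpos : ∀ t, 0 < q t := fun t => (hq t).1
  -- if θ q t ≤ 1 then the log factor is at least 1
  have hL1 : ∀ t, θ * q t ≤ 1 →
      1 ≤ Real.log (Real.exp 1 - Real.log (θ * q t)) := by
    intro t h
    have hlog : Real.log (θ * q t) ≤ 0 :=
      Real.log_nonpos (le_of_lt (mul_pos hθ (hqpos t))) h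
    have h2 : Real.exp 1 ≤ Real.exp 1 - Real.log (θ * q t) := by linarith
    calc (1 : ℝ) = Real.log (Real.exp 1) := (Real.log_exp 1).symm
      _ ≤ _ := Real.log_le_log (Real.exp_pos 1) h2
  -- θ q t ≤ 1 for all t, and q is decreasing
  have hbound : ∀ t, θ * q t ≤ 1 := by
    intro t; induction t with
    | zero => exact h0
    | succ t ih =>
      have hL := hL1 t ih
      have hLpos : 0 < Real.log (Real.exp 1 - Real.log (θ * q t)) :=
        lt_of_lt_of_le one_pos hL
      have hneg : -η * q t ^ 2 / Real.log (Real.exp 1 - Real.log (θ * q t)) < 0 := by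
        apply div_neg_of_neg_of_pos _ hLpos
        have : 0 < η * q t ^ 2 := mul_pos hη (pow_pos (hqpos t) 2)
        linarith
      have h1 := hrec t
      have : q (t + 1) ≤ q t := by linarith
      nlinarith [hqpos (t + 1)]
  have hmono : ∀ t, q (t + 1) ≤ q t := by
    intro t
    have hL := hL1 t (hbound t)
    have hLpos : 0 < Real.log (Real.exp 1 - Real.log (θ * q t)) :=
      lt_of_lt_of_le one_pos hL
    have hneg : -η * q t ^ 2 / Real.log (Real.exp 1 - Real.log (θ * q t)) < 0 := by
      apply div_neg_of_neg_of_pos _ hLpos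
      have : 0 < η * q t ^ 2 := mul_pos hη (pow_pos (hqpos t) 2)
      linarith
    have h1 := hrec t
    linarith
  have hanti : ∀ s t : ℕ, s ≤ t → q t ≤ q s := by
    intro s t hst
    exact (antitone_nat_of_succ_le hmono) hst
  intro T hT
  have hθT : θ ≤ η * T := by
    have := (one_le_div hθ).mp hT
    linarith
  have hηT : 0 < η * (T : ℝ) := lt_of_lt_of_le hθ hθT
  by_contra hcon
  push_neg at hcon
  set A := Real.exp 1 + Real.log (η * T / θ) with hA
  set M := Real.log A with hM
  have hlognn : 0 ≤ Real.log (η * T / θ) := Real.log_nonneg hT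
  have hM1 : 1 ≤ M := by
    have h2 : Real.exp 1 ≤ A := by rw [hA]; linarith
    calc (1 : ℝ) = Real.log (Real.exp 1) := (Real.log_exp 1).symm
      _ ≤ M := Real.log_le_log (Real.exp_pos 1) h2
  have hMpos : 0 < M := lt_of_lt_of_le one_pos hM1
  have hconv : 1 / (η * T) * M = M / (η * T) := by ring
  have hqT : M / (η * T) < q T := by rw [← hconv]; exact hcon
  -- the log factor is ≤ M for t ≤ T
  have hLle : ∀ t, t ≤ T →
      Real.log (Real.exp 1 - Real.log (θ * q t)) ≤ M := by
    intro t ht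
    have h1 : M / (η * T) < q t := lt_of_lt_of_le hqT (hanti t T ht)
    have h1' : 1 / (η * T) ≤ q t := by
      have : 1 / (η * T) ≤ M / (η * T) := by gcongr
      linarith
    have h2 : θ / (η * T) ≤ θ * q t := by
      calc θ / (η * T) = θ * (1 / (η * T)) := by ring
        _ ≤ θ * q t := mul_le_mul_of_nonneg_left h1' hθ.le
    have h3 : Real.log (θ / (η * T)) ≤ Real.log (θ * q t) :=
      Real.log_le_log (by positivity) h2
    have h4 : Real.log (θ / (η * T)) = -Real.log (η * T / θ) := by
      rw [← inv_div, Real.log_inv]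
    have hlog : Real.log (θ * q t) ≤ 0 :=
      Real.log_nonpos (le_of_lt (mul_pos hθ (hqpos t))) (hbound t)
    have h5 : Real.exp 1 - Real.log (θ * q t) ≤ A := by
      rw [hA]; linarith
    exact Real.log_le_log (by nlinarith [Real.exp_pos 1]) h5
  -- key induction
  have key : ∀ t, t ≤ T → 1 / q 0 + t * (η / M) ≤ 1 / q t := by
    intro t; induction t with
    | zero => intro _; simp
    | succ t ih =>
      intro ht
      have ht' : t ≤ T := Nat.le_of_succ_le ht
      have ih' := ih ht'
      have hL1' := hL1 t (hbound t)
      have hLM := hLle t ht'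
      have hLpos : 0 < Real.log (Real.exp 1 - Real.log (θ * q t)) :=
        lt_of_lt_of_le one_pos hL1'
      have ha := hqpos t
      have hb := hqpos (t + 1)
      have hstep : q (t + 1) ≤ q t - η * q t ^ 2 / M := by
        have h1 := hrec t
        have h2 : η * q t ^ 2 / M ≤
            η * q t ^ 2 / Real.log (Real.exp 1 - Real.log (θ * q t)) :=
          div_le_div_of_nonneg_left (by positivity) hLpos hLM
        have h3 : -η * q t ^ 2 / Real.log (Real.exp 1 - Real.log (θ * q t))
            = -(η * q t ^ 2 / Real.log (Real.exp 1 - Real.log (θ * q t))) := by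
          ring
        linarith
      have hstep' : q (t + 1) * M ≤ q t * M - η * q t ^ 2 := by
        have h1 := mul_le_mul_of_nonneg_right hstep hMpos.le
        have hc : (q t - η * q t ^ 2 / M) * M = q t * M - η * q t ^ 2 := by
          field_simp
        linarith
      have hab : q (t + 1) ≤ q t := hmono t
      have hstep2 : 1 / q t + η / M ≤ 1 / q (t + 1) := by
        rw [div_add_div _ _ (ne_of_gt ha) (ne_of_gt hMpos),
            div_le_div_iff₀ (by positivity) hb]
        nlinarith [mul_nonneg (mul_nonneg hη.le ha.le) (sub_nonneg.mpr hab)]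
      calc 1 / q 0 + ((t + 1 : ℕ) : ℝ) * (η / M)
          = (1 / q 0 + (t : ℝ) * (η / M)) + η / M := by push_cast; ring
        _ ≤ 1 / q t + η / M := by linarith
        _ ≤ 1 / q (t + 1) := hstep2
  have hfin := key T le_rfl
  have hq0 : 0 < 1 / q 0 := one_div_pos.mpr (hqpos 0)
  have h1 : (T : ℝ) * (η / M) < 1 / q T := by linarith
  have h2 : (η * T) / M < 1 / q T := by
    have : (T : ℝ) * (η / M) = (η * T) / M := by ring
    linarith [this ▸ h1]
  have h3 : q T < M / (η * T) := by
    rw [div_lt_div_iff₀ hMpos (hqpos T)] at h2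
    rw [lt_div_iff₀ hηT]
    nlinarith
  linarith
end

section
/- The function γ(p) = p² / log(e − log p) is increasing and convex on the interval (0,1). -/
open Set Real

noncomputable def sambaU (p : ℝ) : ℝ := Real.exp 1 - Real.log p
noncomputable def sambaL (p : ℝ) : ℝ := Real.log (sambaU p)
noncomputable def sambaF (p : ℝ) : ℝ := (2 * p * sambaL p + p / sambaU p) / (sambaL p) ^ 2
noncomputable def sambaG (p : ℝ) : ℝ :=
  (2 * (sambaL p) ^ 2 + 3 * sambaL p / sambaU p + sambaL p / (sambaU p) ^ 2
    + 2 / (sambaU p) ^ 2) / (sambaL p) ^ 3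

lemma sambaU_gt {p : ℝ} (hp : p ∈ Set.Ioo (0:ℝ) 1) : Real.exp 1 < sambaU p := by
  have := Real.log_neg hp.1 hp.2
  unfold sambaU; linarith

lemma sambaU_pos {p : ℝ} (hp : p ∈ Set.Ioo (0:ℝ) 1) : 0 < sambaU p :=
  lt_trans (Real.exp_pos 1) (sambaU_gt hp)

lemma sambaL_gt {p : ℝ} (hp : p ∈ Set.Ioo (0:ℝ) 1) : 1 < sambaL p := by
  have h := sambaU_gt hp
  have : Real.log (Real.exp 1) < Real.log (sambaU p) :=
    Real.log_lt_log (Real.exp_pos 1) h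
  simpa [sambaL, Real.log_exp] using this

lemma sambaL_pos {p : ℝ} (hp : p ∈ Set.Ioo (0:ℝ) 1) : 0 < sambaL p :=
  lt_trans one_pos (sambaL_gt hp)

lemma sambaU_hasDeriv {p : ℝ} (hp : p ∈ Set.Ioo (0:ℝ) 1) :
    HasDerivAt sambaU (-p⁻¹) p :=
  (Real.hasDerivAt_log (ne_of_gt hp.1)).const_sub (Real.exp 1)

lemma sambaL_hasDeriv {p : ℝ} (hp : p ∈ Set.Ioo (0:ℝ) 1) :
    HasDerivAt sambaL (-p⁻¹ / sambaU p) p :=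
  (sambaU_hasDeriv hp).log (ne_of_gt (sambaU_pos hp))

lemma samba_f_hasDeriv {p : ℝ} (hp : p ∈ Set.Ioo (0:ℝ) 1) :
    HasDerivAt (fun x : ℝ => x ^ 2 / Real.log (Real.exp 1 - Real.log x)) (sambaF p) p := by
  have hLne : sambaL p ≠ 0 := ne_of_gt (sambaL_pos hp)
  have hUne : sambaU p ≠ 0 := ne_of_gt (sambaU_pos hp)
  have h := (hasDerivAt_pow 2 p).div (sambaL_hasDeriv hp) hLne
  have heq : (fun x : ℝ => x ^ 2 / Real.log (Real.exp 1 - Real.log x))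
      = fun x : ℝ => x ^ 2 / sambaL x := rfl
  rw [heq]
  refine h.congr_deriv ?_
  unfold sambaF
  have hpne : p ≠ 0 := ne_of_gt hp.1
  field_simp
  ring

lemma samba_F_hasDeriv {p : ℝ} (hp : p ∈ Set.Ioo (0:ℝ) 1) :
    HasDerivAt sambaF (sambaG p) p := by
  have hLne : sambaL p ≠ 0 := ne_of_gt (sambaL_pos hp)
  have hUne : sambaU p ≠ 0 := ne_of_gt (sambaU_pos hp)
  have hpne : p ≠ 0 := ne_of_gt hp.1
  -- numerator: 2*x*L x + x / U x
  have hnum : HasDerivAt (fun x : ℝ => 2 * x * sambaL x + x / sambaU x)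
      ((2 * sambaL p + 2 * p * (-p⁻¹ / sambaU p))
        + ((1 * sambaU p - p * (-p⁻¹)) / (sambaU p) ^ 2)) p := by
    have h1 : HasDerivAt (fun x : ℝ => 2 * x) 2 p := by
      simpa using (hasDerivAt_id p).const_mul (2:ℝ)
    have h2 := h1.mul (sambaL_hasDeriv hp)
    have h3 := (hasDerivAt_id p).div (sambaU_hasDeriv hp) hUne
    have := h2.add h3
    refine this.congr_deriv ?_
    simp only [id]
  have hden : HasDerivAt (fun x : ℝ => (sambaL x) ^ 2)
      (2 * sambaL p ^ 1 * (-p⁻¹ / sambaU p)) p := by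
    have h4 := (sambaL_hasDeriv hp).pow 2
    simp at h4
    simp only [pow_one]
    exact h4
  have h := hnum.div hden (pow_ne_zero 2 hLne)
  have heq : sambaF = fun x : ℝ => (2 * x * sambaL x + x / sambaU x) / (sambaL x) ^ 2 := rfl
  rw [heq]
  refine h.congr_deriv ?_
  unfold sambaG
  field_simp
  try ring

lemma sambaF_nonneg {p : ℝ} (hp : p ∈ Set.Ioo (0:ℝ) 1) : 0 ≤ sambaF p := by
  have hL := sambaL_pos hp
  have hU := sambaU_pos hp
  have hp0 := hp.1
  unfold sambaF
  positivity

lemma sambaG_nonneg {p : ℝ} (hp : p ∈ Set.Ioo (0:ℝ) 1) : 0 ≤ sambaG p := by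
  have hL := sambaL_pos hp
  have hU := sambaU_pos hp
  unfold sambaG
  positivity

/-- **Lemma (learning-rate regularity, iterated logarithm).**
The step-size function `γ(p) = p² / log(e − log p)` is increasing and convex on `(0,1)`. -/
theorem samba_gamma_loglog_increasing_convex :
    MonotoneOn (fun p : ℝ => p ^ 2 / Real.log (Real.exp 1 - Real.log p))
      (Set.Ioo (0 : ℝ) 1) ∧
    ConvexOn ℝ (Set.Ioo (0 : ℝ) 1)
      (fun p : ℝ => p ^ 2 / Real.log (Real.exp 1 - Real.log p)) := by
  set f : ℝ → ℝ := fun p : ℝ => p ^ 2 / Real.log (Real.exp 1 - Real.log p) with hf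
  have hopen : IsOpen (Set.Ioo (0:ℝ) 1) := isOpen_Ioo
  have hconv : Convex ℝ (Set.Ioo (0:ℝ) 1) := convex_Ioo 0 1
  have hint : interior (Set.Ioo (0:ℝ) 1) = Set.Ioo (0:ℝ) 1 := hopen.interior_eq
  have hdiff : DifferentiableOn ℝ f (Set.Ioo (0:ℝ) 1) := fun p hp =>
    ((samba_f_hasDeriv hp).differentiableAt).differentiableWithinAt
  have hcont : ContinuousOn f (Set.Ioo (0:ℝ) 1) := hdiff.continuousOn
  have hderiv_eq : ∀ p ∈ Set.Ioo (0:ℝ) 1, deriv f p = sambaF p := fun p hp =>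
    (samba_f_hasDeriv hp).deriv
  have hderivF : ∀ p ∈ Set.Ioo (0:ℝ) 1, HasDerivAt (deriv f) (sambaG p) p := by
    intro p hp
    have hev : deriv f =ᶠ[nhds p] sambaF := by
      filter_upwards [hopen.mem_nhds hp] with x hx using hderiv_eq x hx
    exact (samba_F_hasDeriv hp).congr_of_eventuallyEq hev
  constructor
  · exact monotoneOn_of_deriv_nonneg hconv hcont (by
      rw [hint]; exact hdiff) (by
      rw [hint]; intro p hp; rw [hderiv_eq p hp]; exact sambaF_nonneg hp)
  · refine convexOn_of_deriv2_nonneg hconv hcont (by rw [hint]; exact hdiff) ?_ ?_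
    · rw [hint]
      exact fun p hp => ((hderivF p hp).differentiableAt).differentiableWithinAt
    · rw [hint]
      intro p hp
      have : deriv (deriv f) p = sambaG p := (hderivF p hp).deriv
      simp only [Function.iterate_succ, Function.iterate_zero, Function.comp, id_eq]
      rw [this]
      exact sambaG_nonneg hp
end

section
/- Let 𝒜 be a finite set, α ∈ (0,1), and let (p_a : a ∈ 𝒜) satisfy p_a > 0 for all a and Σ_a p_a = 1. Let a_• be an arm attaining the maximum of p_a, let p_• = max_a p_a, and let (I_a : a ∈ 𝒜) be indicator values in {0,1} with Σ_a I_a = 1 and (R_a : a ∈ 𝒜) values in {0,1}. Define the updated vector by p'_a = p_a + α·p_a²·[ I_a·R_a/p_a − I_{a_•}·R_{a_•}/p_• ] for all a ≠ a_•, and p'_{a_•} = 1 − Σ_{a ≠ a_•} p'_a. Then p'_a > 0 for all a ∈ 𝒜 and Σ_a p'_a = 1. -/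
/-- **Lemma (the SAMBA update preserves the interior of the simplex).**
Let `𝒜` be a finite set, `α ∈ (0,1)`, and `(p_a)` a positive probability
vector.  Let `a_•` attain the maximum of `p`, let `(I_a) ∈ {0,1}` with
`Σ_a I_a = 1` and `(R_a) ∈ {0,1}`.  If `p'_a = p_a + α p_a² (I_a R_a/p_a −
I_{a_•} R_{a_•}/p_{a_•})` for `a ≠ a_•` and `p'_{a_•} = 1 − Σ_{a ≠ a_•} p'_a`,
then `p'` is again a positive probability vector. -/
theorem samba_update_preserves_simplex
    {A : Type*} [Fintype A] [DecidableEq A]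
    (α : ℝ) (hα : α ∈ Set.Ioo (0 : ℝ) 1)
    (p : A → ℝ) (hppos : ∀ a, 0 < p a) (hpsum : ∑ a, p a = 1)
    (astar : A) (hastar : ∀ a, p a ≤ p astar)
    (I R : A → ℝ)
    (hI : ∀ a, I a = 0 ∨ I a = 1) (hIsum : ∑ a, I a = 1)
    (hR : ∀ a, R a = 0 ∨ R a = 1)
    (p' : A → ℝ)
    (hupd : ∀ a, a ≠ astar →
      p' a = p a + α * (p a) ^ 2 * (I a * R a / p a - I astar * R astar / p astar))
    (hupd' : p' astar = 1 - ∑ a ∈ Finset.univ.erase astar, p' a) :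
    (∀ a, 0 < p' a) ∧ ∑ a, p' a = 1 := by

  obtain ⟨hα0, hα1⟩ := hα
  have hpstar := hppos astar
  have hErase : ∀ (f : A → ℝ), ∑ a, f a = f astar + ∑ a ∈ Finset.univ.erase astar, f a := by
    intro f
    rw [← Finset.add_sum_erase _ f (Finset.mem_univ astar)]
  have hI0 : ∀ a, 0 ≤ I a := fun a => by rcases hI a with h | h <;> rw [h] <;> norm_num
  have hI1 : ∀ a, I a ≤ 1 := fun a => by rcases hI a with h | h <;> rw [h] <;> norm_num
  have hR0 : ∀ a, 0 ≤ R a := fun a => by rcases hR a with h | h <;> rw [h] <;> norm_num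
  have hR1 : ∀ a, R a ≤ 1 := fun a => by rcases hR a with h | h <;> rw [h] <;> norm_num
  have hsum : ∑ a, p' a = 1 := by
    rw [hErase p', hupd']; ring
  refine ⟨?_, hsum⟩
  have hpos_off : ∀ a, a ≠ astar → 0 < p' a := by
    intro a ha
    have hpa := hppos a
    have hx : 0 ≤ α * p a ^ 2 * (I a * R a / p a) := by
      have := hI0 a; have := hR0 a; positivity
    have hy : α * p a ^ 2 * (I astar * R astar / p astar) ≤ α * p a := by
      have heq : α * p a ^ 2 * (I astar * R astar / p astar)
          = α * p a ^ 2 * (I astar * R astar) / p astar := by ring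
      rw [heq, div_le_iff₀ hpstar]
      have hIR : I astar * R astar ≤ 1 :=
        mul_le_one₀ (hI1 astar) (hR0 astar) (hR1 astar)
      nlinarith [mul_nonneg (mul_nonneg hα0.le (sq_nonneg (p a))) (sub_nonneg.2 hIR),
        mul_nonneg (mul_nonneg hα0.le hpa.le) (sub_nonneg.2 (hastar a))]
    have hsub : α * p a < p a := by nlinarith
    have expand : p a + α * p a ^ 2 * (I a * R a / p a - I astar * R astar / p astar)
        = p a + α * p a ^ 2 * (I a * R a / p a)
          - α * p a ^ 2 * (I astar * R astar / p astar) := by ring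
    rw [hupd a ha, expand]
    linarith
  intro a
  by_cases ha : a = astar
  · subst ha
    have hbound : ∀ b ∈ Finset.univ.erase a, p' b ≤ p b + α * (p a * I b) := by
      intro b hb
      have hb' : b ≠ a := Finset.ne_of_mem_erase hb
      have hpb := hppos b
      have hy : 0 ≤ α * p b ^ 2 * (I a * R a / p a) := by
        have := hI0 a; have := hR0 a; positivity
      have hx : α * p b ^ 2 * (I b * R b / p b) ≤ α * (p a * I b) := by
        have heq : α * p b ^ 2 * (I b * R b / p b) = α * (p b * (I b * R b)) := by
          field_simp
        rw [heq]
        have key : p b * (I b * R b) ≤ p a * I b := by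
          nlinarith [mul_nonneg (hI0 b) (sub_nonneg.2 (hastar b)),
            mul_nonneg (mul_nonneg hpb.le (hI0 b)) (sub_nonneg.2 (hR1 b))]
        exact mul_le_mul_of_nonneg_left key hα0.le
      have expand : p b + α * p b ^ 2 * (I b * R b / p b - I a * R a / p a)
          = p b + α * p b ^ 2 * (I b * R b / p b)
            - α * p b ^ 2 * (I a * R a / p a) := by ring
      rw [hupd b hb', expand]
      linarith
    have hS1 : ∑ b ∈ Finset.univ.erase a, p' b
        ≤ ∑ b ∈ Finset.univ.erase a, (p b + α * (p a * I b)) :=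
      Finset.sum_le_sum hbound
    have hS2 : ∑ b ∈ Finset.univ.erase a, (p b + α * (p a * I b))
        = (∑ b ∈ Finset.univ.erase a, p b) + α * p a * (∑ b ∈ Finset.univ.erase a, I b) := by
      rw [Finset.sum_add_distrib, Finset.mul_sum]
      ring_nf
    have hSp : ∑ b ∈ Finset.univ.erase a, p b = 1 - p a := by
      have := hErase p; rw [hpsum] at this; linarith
    have hSI : ∑ b ∈ Finset.univ.erase a, I b ≤ 1 := by
      rw [← hIsum]
      exact Finset.sum_le_sum_of_subset_of_nonneg (Finset.subset_univ _)
        (fun b _ _ => hI0 b)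
    have hSIle : α * p a * (∑ b ∈ Finset.univ.erase a, I b) ≤ α * p a := by
      nlinarith [mul_pos hα0 (hppos a)]
    have : ∑ b ∈ Finset.univ.erase a, p' b < 1 := by
      have : α * p a < p a := by nlinarith [hppos a]
      linarith [hS1, hS2.le, hSp]
    rw [hupd']
    linarith
  · exact hpos_off a ha
end
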